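/- The anticipating Volterra integral equation has a unique solution on (0, τ): if K : ℝ → ℝ satisfies K(t) = 1 − ∑_{u ≤ t} K(u) · ΔC(u)/Y(u+) for every t with 0 < t < τ, then K(t) = ∏_{u ≤ t} (1 − ΔC(u)/Y†(u)) for every t with 0 < t < τ. -/

import Mathlib

open Finset
open scoped Classical

noncomputable section

namespace SurvStmt

/-- The finite set of distinct observed times `{X_1, …, X_n}`. -/
def times {n : ℕ} (X : Fin n → ℝ) : Finset ℝ := Finset.image X Finset.univ

/-- `Y(t) = #{i : X_i ≥ t}`, as a real number. -/
def Yat {n : ℕ} (X : Fin n → ℝ) (t : ℝ) : ℝ :=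
  ((Finset.univ.filter (fun i => t ≤ X i)).card : ℝ)

/-- `Y(t+) = #{i : X_i > t}`, as a real number. -/
def Yplus {n : ℕ} (X : Fin n → ℝ) (t : ℝ) : ℝ :=
  ((Finset.univ.filter (fun i => t < X i)).card : ℝ)

/-- `ΔN(t) = #{i : X_i = t, D_i = 1}`, as a real number. -/
def dN {n : ℕ} (X : Fin n → ℝ) (D : Fin n → Bool) (t : ℝ) : ℝ :=
  ((Finset.univ.filter (fun i => X i = t ∧ D i = true)).card : ℝ)

/-- `ΔC(t) = #{i : X_i = t, D_i = 0}`, as a real number. -/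
def dC {n : ℕ} (X : Fin n → ℝ) (D : Fin n → Bool) (t : ℝ) : ℝ :=
  ((Finset.univ.filter (fun i => X i = t ∧ D i = false)).card : ℝ)

/-- `Y†(t) = Y(t) − ΔN(t)`. -/
def Ydag {n : ℕ} (X : Fin n → ℝ) (D : Fin n → Bool) (t : ℝ) : ℝ :=
  Yat X t - dN X D t

/-- `τ = max_i X_i`, the largest observation time (0 if there is no data). -/
def tau {n : ℕ} (X : Fin n → ℝ) : ℝ := WithBot.unbotD 0 (times X).max

/-- Censoring product-limit estimator `K̂(t) = ∏_{u ≤ t} (1 − ΔC(u)/Y†(u))`. -/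
def Khat {n : ℕ} (X : Fin n → ℝ) (D : Fin n → Bool) (t : ℝ) : ℝ :=
  ∏ u ∈ (times X).filter (fun u => u ≤ t), (1 - dC X D u / Ydag X D u)

/-- Left limit `K̂(t−) = ∏_{u < t} (1 − ΔC(u)/Y†(u))`. -/
def Kminus {n : ℕ} (X : Fin n → ℝ) (D : Fin n → Bool) (t : ℝ) : ℝ :=
  ∏ u ∈ (times X).filter (fun u => u < t), (1 - dC X D u / Ydag X D u)

/-- Failure product-limit estimator `Ŝ_PL(t) = ∏_{u ≤ t} (1 − ΔN(u)/Y(u))`. -/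
def SPL {n : ℕ} (X : Fin n → ℝ) (D : Fin n → Bool) (t : ℝ) : ℝ :=
  ∏ u ∈ (times X).filter (fun u => u ≤ t), (1 - dN X D u / Yat X u)

/-- Left limit `Ŝ_PL(t−) = ∏_{u < t} (1 − ΔN(u)/Y(u))`. -/
def SPLminus {n : ℕ} (X : Fin n → ℝ) (D : Fin n → Bool) (t : ℝ) : ℝ :=
  ∏ u ∈ (times X).filter (fun u => u < t), (1 - dN X D u / Yat X u)

/-- IPCW estimator `F̂_IPCW(t) = (1/n) ∑_i D_i 1{X_i ≤ t} / K̂(X_i−)`. -/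
def FIPCW {n : ℕ} (X : Fin n → ℝ) (D : Fin n → Bool) (t : ℝ) : ℝ :=
  (1 / (n : ℝ)) * ∑ i : Fin n,
    (if D i = true then (1 : ℝ) else 0) * (if X i ≤ t then (1 : ℝ) else 0) / Kminus X D (X i)

/-- IPCW survival estimator `S̃_IPCW(t) = (1/n) ∑_i D_i 1{X_i > t} / K̂(X_i−)`. -/
def SIPCW {n : ℕ} (X : Fin n → ℝ) (D : Fin n → Bool) (t : ℝ) : ℝ :=
  (1 / (n : ℝ)) * ∑ i : Fin n,
    (if D i = true then (1 : ℝ) else 0) * (if t < X i then (1 : ℝ) else 0) / Kminus X D (X i)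

/-- RTTR jump weight `J(v) = 1/(n · K̂(v−))`. -/
def Jw {n : ℕ} (X : Fin n → ℝ) (D : Fin n → Bool) (v : ℝ) : ℝ :=
  1 / ((n : ℝ) * Kminus X D v)

/-- Redistribute-to-the-right estimator
`Ŝ_RTTR(t) = 1 − ∑_{v ≤ t} [J(v) ΔN(v) 1{v < τ} + J(τ) Y(τ) 1{v = τ}]`. -/
def SRTTR {n : ℕ} (X : Fin n → ℝ) (D : Fin n → Bool) (t : ℝ) : ℝ :=
  1 - ∑ v ∈ (times X).filter (fun v => v ≤ t),
      (Jw X D v * dN X D v * (if v < tau X then (1 : ℝ) else 0)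
        + Jw X D (tau X) * Yat X (tau X) * (if v = tau X then (1 : ℝ) else 0))

lemma yat_split {n : ℕ} (X : Fin n → ℝ) (D : Fin n → Bool) (u : ℝ) :
    Yat X u = Yplus X u + dN X D u + dC X D u := by
  have h1 : Yat X u = ∑ i : Fin n, if u ≤ X i then (1:ℝ) else 0 := by
    rw [Yat, ← Finset.sum_boole]
  have h2 : Yplus X u = ∑ i : Fin n, if u < X i then (1:ℝ) else 0 := by
    rw [Yplus, ← Finset.sum_boole]
  have h3 : dN X D u = ∑ i : Fin n, if X i = u ∧ D i = true then (1:ℝ) else 0 := by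
    rw [dN, ← Finset.sum_boole]
  have h4 : dC X D u = ∑ i : Fin n, if X i = u ∧ D i = false then (1:ℝ) else 0 := by
    rw [dC, ← Finset.sum_boole]
  rw [h1, h2, h3, h4, ← Finset.sum_add_distrib, ← Finset.sum_add_distrib]
  refine Finset.sum_congr rfl fun i _ => ?_
  rcases lt_trichotomy u (X i) with h | h | h
  · simp [h.le, h, h.ne']
  · cases hD : D i <;> simp [h, hD]
  · simp [not_le.mpr h, asymm h, ne_of_lt h]

lemma mem_times_pos {n : ℕ} {X : Fin n → ℝ} (hX : ∀ i, 0 < X i) {u : ℝ}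
    (hu : u ∈ times X) : 0 < u := by
  obtain ⟨i, _, rfl⟩ := Finset.mem_image.mp hu; exact hX i

lemma tau_mem {n : ℕ} (hn : 0 < n) (X : Fin n → ℝ) : tau X ∈ times X := by
  have hne : (times X).Nonempty :=
    ⟨X ⟨0, hn⟩, Finset.mem_image_of_mem _ (Finset.mem_univ _)⟩
  obtain ⟨m, hm⟩ := Finset.max_of_nonempty hne
  have : tau X = m := by rw [tau, hm]; rfl
  rw [this]; exact Finset.mem_of_max hm

lemma yplus_pos {n : ℕ} (hn : 0 < n) {X : Fin n → ℝ} {u : ℝ} (hu : u < tau X) :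
    0 < Yplus X u := by
  obtain ⟨i, _, hi⟩ := Finset.mem_image.mp (tau_mem hn X)
  have hiu : u < X i := by rw [hi]; exact hu
  rw [Yplus]
  have : (0:ℕ) < (Finset.univ.filter (fun i => u < X i)).card :=
    Finset.card_pos.mpr ⟨i, by simp [hiu]⟩
  exact_mod_cast this

lemma ydag_eq {n : ℕ} (X : Fin n → ℝ) (D : Fin n → Bool) (u : ℝ) :
    Ydag X D u = Yplus X u + dC X D u := by
  rw [Ydag, yat_split X D u]; ring

lemma dC_nonneg {n : ℕ} (X : Fin n → ℝ) (D : Fin n → Bool) (u : ℝ) :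
    0 ≤ dC X D u := Nat.cast_nonneg _

lemma khat_volterra {n : ℕ} (hn : 0 < n) (X : Fin n → ℝ) (D : Fin n → Bool)
    (hX : ∀ i, 0 < X i) :
    ∀ N (t : ℝ), ((times X).filter (fun u => u ≤ t)).card ≤ N → t < tau X →
      Khat X D t = 1 - ∑ u ∈ (times X).filter (fun u => u ≤ t),
        Khat X D u * dC X D u / Yplus X u := by
  intro N
  induction N with
  | zero =>
    intro t hc _
    have he : (times X).filter (fun u => u ≤ t) = ∅ :=
      Finset.card_eq_zero.mp (Nat.le_zero.mp hc)
    rw [Khat, he]; simp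
  | succ N ih =>
    intro t hc ht
    by_cases hSe : ((times X).filter (fun u => u ≤ t)) = ∅
    · rw [Khat, hSe]; simp
    · have hSne : ((times X).filter (fun u => u ≤ t)).Nonempty :=
        Finset.nonempty_of_ne_empty hSe
      set S := (times X).filter (fun u => u ≤ t) with hSdef
      set m := S.max' hSne with hmdef
      have hmS : m ∈ S := S.max'_mem hSne
      have hm_times : m ∈ times X := (Finset.mem_filter.mp hmS).1
      have hm_le_t : m ≤ t := (Finset.mem_filter.mp hmS).2
      have hSeq : (times X).filter (fun u => u ≤ m) = S := by
        ext u
        simp only [hSdef, Finset.mem_filter]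
        constructor
        · rintro ⟨hu, hum⟩; exact ⟨hu, hum.trans hm_le_t⟩
        · rintro ⟨hu, hut⟩
          exact ⟨hu, S.le_max' u (by rw [hSdef]; exact Finset.mem_filter.mpr ⟨hu, hut⟩)⟩
      set S' := (times X).filter (fun u => u < m) with hS'def
      have hmS' : m ∉ S' := by
        rw [hS'def]; simp
      have hSins : S = insert m S' := by
        ext u
        rw [← hSeq, hS'def]
        simp only [Finset.mem_filter, Finset.mem_insert]
        constructor
        · rintro ⟨hu, hum⟩
          rcases hum.lt_or_eq with h | h
          · exact Or.inr ⟨hu, h⟩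
          · exact Or.inl h
        · rintro (rfl | ⟨hu, hum⟩)
          · exact ⟨hm_times, le_rfl⟩
          · exact ⟨hu, hum.le⟩
      have hm_lt : m < tau X := lt_of_le_of_lt hm_le_t ht
      have hYp : 0 < Yplus X m := yplus_pos hn hm_lt
      have hd : 0 ≤ dC X D m := dC_nonneg X D m
      have hYd : Ydag X D m = Yplus X m + dC X D m := ydag_eq X D m
      -- Kminus m equals 1 - sum over S'
      have hKm : Kminus X D m = 1 - ∑ u ∈ S', Khat X D u * dC X D u / Yplus X u := by
        by_cases hS'e : S' = ∅
        · rw [Kminus, ← hS'def, hS'e]; simp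
        · have hS'ne : S'.Nonempty := Finset.nonempty_of_ne_empty hS'e
          set s := S'.max' hS'ne with hsdef
          have hsS' : s ∈ S' := S'.max'_mem hS'ne
          have hs_times : s ∈ times X := (Finset.mem_filter.mp hsS').1
          have hs_lt_m : s < m := (Finset.mem_filter.mp hsS').2
          have hS'eq : (times X).filter (fun u => u ≤ s) = S' := by
            ext u
            rw [hS'def]
            simp only [Finset.mem_filter]
            constructor
            · rintro ⟨hu, hus⟩; exact ⟨hu, lt_of_le_of_lt hus hs_lt_m⟩
            · rintro ⟨hu, hum⟩
              exact ⟨hu, S'.le_max' u (by rw [hS'def]; exact Finset.mem_filter.mpr ⟨hu, hum⟩)⟩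
          have hcard : ((times X).filter (fun u => u ≤ s)).card ≤ N := by
            rw [hS'eq]
            have h1 : S.card ≤ N + 1 := by rw [hSdef]; exact hc
            have h2 : S.card = S'.card + 1 := by
              rw [hSins, Finset.card_insert_of_notMem hmS']
            omega
          have hihs := ih s hcard (lt_trans hs_lt_m hm_lt)
          rw [hS'eq] at hihs
          have : Khat X D s = Kminus X D m := by
            rw [Khat, Kminus, hS'eq, ← hS'def]
          rw [← this]
          exact hihs
      -- now the main identity
      have hKhat_m : Khat X D m = (1 - dC X D m / Ydag X D m) * Kminus X D m := by
        rw [Khat, Kminus, hSeq, hSins, ← hS'def, Finset.prod_insert hmS']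
      have hKhat_t : Khat X D t = Khat X D m := by
        rw [Khat, Khat, hSeq, ← hSdef]
      rw [hKhat_t, hSins, Finset.sum_insert hmS', hKhat_m, hYd]
      have hSig : ∑ u ∈ S', Khat X D u * dC X D u / Yplus X u = 1 - Kminus X D m := by
        linarith [hKm]
      rw [hSig]
      have hYp' : Yplus X m ≠ 0 := ne_of_gt hYp
      have hYd' : Yplus X m + dC X D m ≠ 0 := by positivity
      field_simp
      ring

/-- the anticipating Volterra equation has a unique solution on `(0, τ)`:
any solution equals the censoring product-limit estimator there. -/
theorem stmt2 (n : ℕ) (hn : 0 < n) (X : Fin n → ℝ) (D : Fin n → Bool)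
    (hX : ∀ i, 0 < X i) (K : ℝ → ℝ)
    (hK : ∀ t : ℝ, 0 < t → t < tau X →
      K t = 1 - ∑ u ∈ (times X).filter (fun u => u ≤ t),
          K u * dC X D u / Yplus X u) :
    ∀ t : ℝ, 0 < t → t < tau X →
      K t = ∏ u ∈ (times X).filter (fun u => u ≤ t), (1 - dC X D u / Ydag X D u) := by
  suffices H : ∀ N (t : ℝ), ((times X).filter (fun u => u ≤ t)).card ≤ N →
      0 < t → t < tau X → K t = Khat X D t by
    intro t ht1 ht2
    exact H _ t le_rfl ht1 ht2
  intro N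
  induction N with
  | zero =>
    intro t hc ht1 ht2
    have he : (times X).filter (fun u => u ≤ t) = ∅ :=
      Finset.card_eq_zero.mp (Nat.le_zero.mp hc)
    rw [hK t ht1 ht2, Khat, he]; simp
  | succ N ih =>
    intro t hc ht1 ht2
    by_cases hSe : ((times X).filter (fun u => u ≤ t)) = ∅
    · rw [hK t ht1 ht2, Khat, hSe]; simp
    · have hSne : ((times X).filter (fun u => u ≤ t)).Nonempty :=
        Finset.nonempty_of_ne_empty hSe
      set S := (times X).filter (fun u => u ≤ t) with hSdef
      set m := S.max' hSne with hmdef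
      have hmS : m ∈ S := S.max'_mem hSne
      have hm_times : m ∈ times X := (Finset.mem_filter.mp hmS).1
      have hm_le_t : m ≤ t := (Finset.mem_filter.mp hmS).2
      have hSeq : (times X).filter (fun u => u ≤ m) = S := by
        ext u
        simp only [hSdef, Finset.mem_filter]
        constructor
        · rintro ⟨hu, hum⟩; exact ⟨hu, hum.trans hm_le_t⟩
        · rintro ⟨hu, hut⟩
          exact ⟨hu, S.le_max' u (by rw [hSdef]; exact Finset.mem_filter.mpr ⟨hu, hut⟩)⟩
      set S' := (times X).filter (fun u => u < m) with hS'def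
      have hmS' : m ∉ S' := by rw [hS'def]; simp
      have hSins : S = insert m S' := by
        ext u
        rw [← hSeq, hS'def]
        simp only [Finset.mem_filter, Finset.mem_insert]
        constructor
        · rintro ⟨hu, hum⟩
          rcases hum.lt_or_eq with h | h
          · exact Or.inr ⟨hu, h⟩
          · exact Or.inl h
        · rintro (rfl | ⟨hu, hum⟩)
          · exact ⟨hm_times, le_rfl⟩
          · exact ⟨hu, hum.le⟩
      have hm_pos : 0 < m := mem_times_pos hX hm_times
      have hm_lt : m < tau X := lt_of_le_of_lt hm_le_t ht2
      have hYp : 0 < Yplus X m := yplus_pos hn hm_lt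
      have hd : 0 ≤ dC X D m := dC_nonneg X D m
      have hcardS' : S'.card ≤ N := by
        have h1 : S.card ≤ N + 1 := by rw [hSdef]; exact hc
        have h2 : S.card = S'.card + 1 := by
          rw [hSins, Finset.card_insert_of_notMem hmS']
        omega
      -- for each u ∈ S', K u = Khat u by IH
      have hIH : ∀ u ∈ S', K u = Khat X D u := by
        intro u huS'
        have hu_times : u ∈ times X := (Finset.mem_filter.mp huS').1
        have hu_lt_m : u < m := (Finset.mem_filter.mp huS').2
        have hsub : (times X).filter (fun v => v ≤ u) ⊆ S' := by
          intro v hv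
          rw [hS'def]
          exact Finset.mem_filter.mpr ⟨(Finset.mem_filter.mp hv).1,
            lt_of_le_of_lt (Finset.mem_filter.mp hv).2 hu_lt_m⟩
        exact ih u (le_trans (Finset.card_le_card hsub) hcardS')
          (mem_times_pos hX hu_times) (lt_trans hu_lt_m hm_lt)
      -- K t = K m
      have hKt : K t = K m := by
        rw [hK t ht1 ht2, hK m hm_pos hm_lt, hSeq, ← hSdef]
      have hKhat_t : Khat X D t = Khat X D m := by
        rw [Khat, Khat, hSeq, ← hSdef]
      rw [hKt, hKhat_t]
      -- equations at m
      have e1 : K m = 1 - (K m * dC X D m / Yplus X m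
          + ∑ u ∈ S', Khat X D u * dC X D u / Yplus X u) := by
        have e1' := hK m hm_pos hm_lt
        rw [hSeq, hSins, Finset.sum_insert hmS'] at e1'
        have hsum : ∑ u ∈ S', K u * dC X D u / Yplus X u
            = ∑ u ∈ S', Khat X D u * dC X D u / Yplus X u :=
          Finset.sum_congr rfl fun u hu => by rw [hIH u hu]
        rw [hsum] at e1'
        exact e1'
      have e2 : Khat X D m = 1 - (Khat X D m * dC X D m / Yplus X m
          + ∑ u ∈ S', Khat X D u * dC X D u / Yplus X u) := by
        have := khat_volterra hn X D hX (N + 1) m (by rw [hSeq, hSdef]; exact hc) hm_lt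
        rw [hSeq, hSins, Finset.sum_insert hmS'] at this
        exact this
      have hc0 : 0 ≤ dC X D m / Yplus X m := div_nonneg hd hYp.le
      have key : (K m - Khat X D m) * (1 + dC X D m / Yplus X m) = 0 := by
        have hm1 : K m * dC X D m / Yplus X m = K m * (dC X D m / Yplus X m) := by
          ring
        have hm2 : Khat X D m * dC X D m / Yplus X m
            = Khat X D m * (dC X D m / Yplus X m) := by ring
        rw [hm1] at e1; rw [hm2] at e2
        nlinarith [e1, e2]
      rcases mul_eq_zero.mp key with h | h
      · linarith
      · exfalso; nlinarith

end SurvStmt
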